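/- Let d and k be integers with d ≥ 2 and k ≥ d + 1, set m = 2d − 2, and let n be a positive multiple of 2d − 3. Let X be a set with kn elements and let X = X₁ ∪ … ∪ X_{2d−2} be the m-coloring with |X₁| = (k−d+1)n and |X₂| = |X₃| = … = |X_{2d−2}| = (d−1)n/(2d−3). Then this coloring satisfies condition (★) (for every t ∈ {1, …, d−1} and every I ⊆ {1, …, m} with |I| = t, Σ_{i∈I} |X_i| ≤ (k−d+t)n), but for every pair of distinct indices i ≠ j, the (m−1)-coloring obtained by merging X_i and X_j into a single class violates condition (★). -/

import Mathlib

theorem merging_impossible_example_k_gt_d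
    {α : Type*} [DecidableEq α] (d k n r : ℕ)
    (hd : 2 ≤ d) (hk : d + 1 ≤ k) (hr : 1 ≤ r) (hn : n = (2 * d - 3) * r)
    (X : Finset α) (C : Fin (2 * d - 2) → Finset α)
    (hdisj : ∀ i j : Fin (2 * d - 2), i ≠ j → Disjoint (C i) (C j))
    (hunion : Finset.univ.biUnion C = X)
    (hcard : X.card = k * n)
    (hsize1 : ∀ i : Fin (2 * d - 2), (i : ℕ) = 0 → (C i).card = (k - d + 1) * n)
    (hsizes : ∀ i : Fin (2 * d - 2), (i : ℕ) ≠ 0 → (C i).card = (d - 1) * r) :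
    -- the coloring satisfies condition (★)
    (∀ t : ℕ, 1 ≤ t → t ≤ d - 1 → ∀ I : Finset (Fin (2 * d - 2)), I.card = t →
        ∑ i ∈ I, (C i).card ≤ (k - d + t) * n) ∧
    -- but merging any two distinct classes violates condition (★)
    (∀ i j : Fin (2 * d - 2), i ≠ j →
      ¬ (∀ t : ℕ, 1 ≤ t → t ≤ d - 1 → ∀ I : Finset (Fin (2 * d - 2)), j ∉ I → I.card = t →
          ∑ l ∈ I, (if l = i then (C i ∪ C j).card else (C l).card) ≤ (k - d + t) * n)) := by
  have hz : (0:ℕ) < 2 * d - 2 := by omega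
  set z : Fin (2 * d - 2) := ⟨0, hz⟩ with hzdef
  have hzval : (z : ℕ) = 0 := rfl
  have hval0 : ∀ i : Fin (2 * d - 2), (i : ℕ) = 0 → i = z := by
    intro i hi; exact Fin.ext hi
  constructor
  · intro t ht1 ht2 I hI
    by_cases hzI : z ∈ I
    · have hsum : ∑ i ∈ I, (C i).card = (k - d + 1) * n + (t - 1) * ((d - 1) * r) := by
        rw [← Finset.add_sum_erase I _ hzI, hsize1 z rfl]
        congr 1
        rw [Finset.sum_congr rfl (fun i hi => hsizes i (fun h =>
          (Finset.ne_of_mem_erase hi) (hval0 i h))), Finset.sum_const, smul_eq_mul,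
          Finset.card_erase_of_mem hzI, hI]
      rw [hsum, hn]
      obtain ⟨e, he⟩ := Nat.exists_eq_add_of_le hk
      obtain ⟨s, hs⟩ := Nat.exists_eq_add_of_le ht1
      have h1 : k - d + 1 = e + 2 := by omega
      have h2 : k - d + t = e + 2 + s := by omega
      have h3 : d - 1 = d - 2 + 1 := by omega
      have h4 : 2 * d - 3 = 2 * (d - 2) + 1 := by omega
      have h5 : t - 1 = s := by omega
      rw [h1, h2, h3, h4, h5]
      nlinarith [Nat.zero_le (s * (d - 2) * r)]
    · have hsum : ∑ i ∈ I, (C i).card = t * ((d - 1) * r) := by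
        rw [Finset.sum_congr rfl (fun i hi => hsizes i (fun h =>
          hzI (hval0 i h ▸ hi))), Finset.sum_const, smul_eq_mul, hI]
      rw [hsum, hn]
      obtain ⟨e, he⟩ := Nat.exists_eq_add_of_le hk
      obtain ⟨s, hs⟩ := Nat.exists_eq_add_of_le ht1
      have h2 : k - d + t = e + 2 + s := by omega
      have h3 : d - 1 = d - 2 + 1 := by omega
      have h4 : 2 * d - 3 = 2 * (d - 2) + 1 := by omega
      rw [h2, h3, h4, hs]
      nlinarith [Nat.zero_le (s * (d - 2) * r), Nat.zero_le (e * r), Nat.zero_le (e * (d-2) * r)]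
  · intro i j hij hcond
    have hu : (C i ∪ C j).card = (C i).card + (C j).card :=
      Finset.card_union_of_disjoint (hdisj i j hij)
    have hij' : (i : ℕ) ≠ (j : ℕ) := fun h => hij (Fin.ext h)
    by_cases hi0 : (i : ℕ) = 0
    · have hj0 : (j : ℕ) ≠ 0 := by omega
      have := hcond 1 le_rfl (by omega) {i} (Finset.notMem_singleton.mpr (Ne.symm hij)) (by simp)
      rw [Finset.sum_singleton, if_pos rfl, hu, hsize1 i hi0, hsizes j hj0] at this
      have hpos : 0 < (d - 1) * r := Nat.mul_pos (by omega) (by omega)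
      omega
    · by_cases hj0 : (j : ℕ) = 0
      · have := hcond 1 le_rfl (by omega) {i} (Finset.notMem_singleton.mpr (Ne.symm hij)) (by simp)
        rw [Finset.sum_singleton, if_pos rfl, hu, hsize1 j hj0, hsizes i hi0] at this
        have hpos : 0 < (d - 1) * r := Nat.mul_pos (by omega) (by omega)
        omega
      · have hd3 : 3 ≤ d := by have := i.isLt; have := j.isLt; omega
        have hzi : z ≠ i := fun h => hi0 (by rw [← h])
        have hjI : j ∉ ({z, i} : Finset (Fin (2 * d - 2))) := by
          simp only [Finset.mem_insert, Finset.mem_singleton]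
          push_neg
          exact ⟨fun h => hj0 (by rw [h]), Ne.symm hij⟩
        have hcard2 : ({z, i} : Finset (Fin (2 * d - 2))).card = 2 := by
          rw [Finset.card_insert_of_notMem (by simp [hzi]), Finset.card_singleton]
        have := hcond 2 (by omega) (by omega) {z, i} hjI hcard2
        rw [Finset.sum_insert (by simp [hzi]), Finset.sum_singleton, if_pos rfl,
          if_neg hzi, hu, hsize1 z rfl, hsizes i hi0, hsizes j hj0, hn] at this
        obtain ⟨e, he⟩ := Nat.exists_eq_add_of_le hk
        obtain ⟨b, hb⟩ := Nat.exists_eq_add_of_le hd3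
        have h1 : k - d + 1 = e + 2 := by omega
        have h2 : k - d + 2 = e + 3 := by omega
        have h3 : d - 1 = b + 2 := by omega
        have h4 : 2 * d - 3 = 2 * b + 3 := by omega
        rw [h1, h2, h3, h4] at this
        have key : (e + 3) * ((2 * b + 3) * r) + r =
            (e + 2) * ((2 * b + 3) * r) + ((b + 2) * r + (b + 2) * r) := by ring
        linarith
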